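/- arXiv:2503.05521 — 6 statements merged into one kernel-verified Lean document; each statement's English description precedes it below -/
import Mathlib

section
/- Along a geodesic γ = (α, β) in a smooth warped product B ×_f F, the quantity (f∘α)^4 · g_F(β', β') is constant in the parameter; equivalently, (f∘α)^2 · ⟨β', β'⟩ (the warped metric length squared of the fiber component) is constant. -/
/-- Along a geodesic `γ = (α, β)` in a warped product `B ×_f F`, the fiber component
satisfies the ODE `β'' = (-2/(f∘α)) (f∘α)' β'`.  Writing `h = f ∘ α`, the quantity
`h⁴ ⟪β', β'⟫_F = h² ⟨β',β'⟩` (the warped metric length squared of the fiber component)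
is constant in the parameter. -/
theorem warped_product_fiber_energy_const
    {F : Type*} [NormedAddCommGroup F] [InnerProductSpace ℝ F]
    (h : ℝ → ℝ) (β : ℝ → F)
    (hpos : ∀ t, 0 < h t)
    (hdiff : Differentiable ℝ h)
    (hβ1 : Differentiable ℝ β) (hβ2 : Differentiable ℝ (deriv β))
    (hode : ∀ t, deriv (deriv β) t = (-2 / h t * deriv h t) • deriv β t) :
    ∀ s t : ℝ,
      h s ^ 4 * (inner ℝ (deriv β s) (deriv β s) : ℝ) =
        h t ^ 4 * (inner ℝ (deriv β t) (deriv β t) : ℝ) := by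
  intro s t
  have key : ∀ x : ℝ,
      HasDerivAt (fun u => h u ^ 4 * (inner ℝ (deriv β u) (deriv β u) : ℝ)) 0 x := by
    intro x
    have hh : HasDerivAt (fun u => h u ^ 4) (4 * h x ^ 3 * deriv h x) x := by
      have h4 := (hdiff x).hasDerivAt.pow 4
      simp at h4
      exact h4
    have hb : HasDerivAt (deriv β) (deriv (deriv β) x) x := (hβ2 x).hasDerivAt
    have hi : HasDerivAt (fun u => (inner ℝ (deriv β u) (deriv β u) : ℝ))
        ((inner ℝ (deriv β x) (deriv (deriv β) x) : ℝ) +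
          (inner ℝ (deriv (deriv β) x) (deriv β x) : ℝ)) x := hb.inner ℝ hb
    have : HasDerivAt (fun u => h u ^ 4 * (inner ℝ (deriv β u) (deriv β u) : ℝ)) _ x := hh.mul hi
    convert this using 1
    rw [hode x, real_inner_smul_right, real_inner_smul_left, real_inner_self_eq_norm_sq]
    have hx := (hpos x).ne'
    field_simp
    ring
  have : ∀ u, deriv (fun u => h u ^ 4 * (inner ℝ (deriv β u) (deriv β u) : ℝ)) u = 0 :=
    fun u => (key u).deriv
  exact is_const_of_deriv_eq_zero (fun u => (key u).differentiableAt) this s t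
end

section
/- Clairaut's relation: for a geodesic γ on a surface of revolution I ×_f S^1 (so γ = (α, β) with β' > 0), the product f(α(t))·cos θ(t) is constant, where θ(t) is the angle between γ'(t) and the meridian through γ(t). -/
/-- Clairaut's relation on a surface of revolution `I ×_f S¹`: for a unit-speed geodesic
`γ = (α, β)` (in coordinates, with `β` the angular coordinate and `β' > 0`),
the quantity `f(α(t))·cos θ(t)` is constant, where `θ(t)` is the angle between `γ'(t)`
and the meridian; for a unit-speed curve `cos θ(t) = f(α(t)) β'(t)`
(the warped inner product of `γ'` with the unit vector `∂_φ/|∂_φ|`). -/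
theorem clairaut_relation
    (f : ℝ → ℝ) (α β cosθ : ℝ → ℝ)
    (hf : ∀ r, 0 < f r) (hfd : Differentiable ℝ f)
    (hα : Differentiable ℝ α) (hβ : Differentiable ℝ β)
    (hβ' : Differentiable ℝ (deriv β))
    (hβpos : ∀ t, 0 < deriv β t)
    (hunit : ∀ t, deriv α t ^ 2 + f (α t) ^ 2 * deriv β t ^ 2 = 1)
    (hode : ∀ t, deriv (deriv β) t =
      -2 / f (α t) * deriv (fun s => f (α s)) t * deriv β t)
    (hcos : ∀ t, cosθ t = f (α t) * deriv β t) :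
    ∀ s t : ℝ, f (α s) * cosθ s = f (α t) * cosθ t := by
  have hfα : Differentiable ℝ (fun s => f (α s)) := hfd.comp hα
  have hg : Differentiable ℝ (fun s => f (α s) ^ 2 * deriv β s) :=
    (hfα.pow 2).mul hβ'
  have hderiv : ∀ t, deriv (fun s => f (α s) ^ 2 * deriv β s) t = 0 := by
    intro t
    have h1 : deriv (fun s => f (α s) ^ 2 * deriv β s) t =
        deriv (fun s => f (α s) ^ 2) t * deriv β t +
        f (α t) ^ 2 * deriv (deriv β) t := by
      rw [deriv_fun_mul (c := fun s => f (α s) ^ 2) ((hfα t).pow 2) (hβ' t)]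
    have h2 : deriv (fun s => f (α s) ^ 2) t =
        2 * f (α t) * deriv (fun s => f (α s)) t := by
      have := deriv_fun_pow (hfα t) 2
      simp only [this]
      ring
    have hne : f (α t) ≠ 0 := (hf (α t)).ne'
    rw [h1, h2, hode t]
    field_simp
    ring
  intro s t
  have := is_const_of_deriv_eq_zero hg hderiv s t
  rw [hcos s, hcos t]
  calc f (α s) * (f (α s) * deriv β s) = f (α s) ^ 2 * deriv β s := by ring
    _ = f (α t) ^ 2 * deriv β t := this
    _ = f (α t) * (f (α t) * deriv β t) := by ring
end

section
/- The warped length functional L is lower semicontinuous with respect to pointwise convergence of admissible paths: if γₙ = (αₙ, βₙ) → γ = (α, β) pointwise on [a,b], then L(γ) ≤ liminf L(γₙ). -/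
/-- The warped sum of an admissible path `γ = (α, β)` over a partition `t`:
`Σᵢ (d_B(α(tᵢ₋₁),α(tᵢ))² + f(α(tᵢ))² d_F(β(tᵢ₋₁),β(tᵢ))²)^{1/2}`. -/
noncomputable def wSum {B F : Type*} [PseudoMetricSpace B] [PseudoMetricSpace F]
    (f : B → ℝ) (γ : ℝ → B × F) {n : ℕ} (t : Fin (n + 1) → ℝ) : ENNReal :=
  ∑ i : Fin n, ENNReal.ofReal
    (Real.sqrt (dist (γ (t i.castSucc)).1 (γ (t i.succ)).1 ^ 2 +
      f (γ (t i.succ)).1 ^ 2 * dist (γ (t i.castSucc)).2 (γ (t i.succ)).2 ^ 2))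

/-- The warped length of a path `γ` over `[a,b]`: the supremum of the warped sums
over all partitions `a = t₀ ≤ t₁ ≤ … ≤ t_N = b`. -/
noncomputable def wLength {B F : Type*} [PseudoMetricSpace B] [PseudoMetricSpace F]
    (f : B → ℝ) (γ : ℝ → B × F) (a b : ℝ) : ENNReal :=
  ⨆ (n : ℕ) (t : Fin (n + 1) → ℝ) (_ : Monotone t) (_ : t 0 = a)
    (_ : t (Fin.last n) = b), wSum f γ t

/-- A path in `B × F` is admissible on `[a,b]` if it is continuous and both of its
components are rectifiable. -/
def Admissible {B F : Type*} [PseudoMetricSpace B] [PseudoMetricSpace F]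
    (γ : ℝ → B × F) (a b : ℝ) : Prop :=
  ContinuousOn γ (Set.Icc a b) ∧
    eVariationOn (fun t => (γ t).1) (Set.Icc a b) < ⊤ ∧
    eVariationOn (fun t => (γ t).2) (Set.Icc a b) < ⊤

/-- The warped product (pseudo-)distance on `B × F`: the infimum of warped lengths of
admissible paths joining the two points. -/
noncomputable def wDist {B F : Type*} [PseudoMetricSpace B] [PseudoMetricSpace F]
    (f : B → ℝ) (x y : B × F) : ENNReal :=
  ⨅ (γ : ℝ → B × F) (_ : Admissible γ 0 1) (_ : γ 0 = x) (_ : γ 1 = y),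
    wLength f γ 0 1

/-- A metric space is strictly intrinsic (geodesic) if every pair of points is joined
by a minimizing geodesic, parametrized affinely on `[0,1]`. -/
def GeodesicMS (F : Type*) [PseudoMetricSpace F] : Prop :=
  ∀ x y : F, ∃ c : ℝ → F, c 0 = x ∧ c 1 = y ∧
    ∀ s t : ℝ, dist (c s) (c t) = |s - t| * dist x y

/-- Lower semicontinuity of the warped length under pointwise convergence of
admissible paths: if `γₙ → γ` pointwise on `[a,b]`, then `L(γ) ≤ liminf L(γₙ)`. -/
theorem warped_length_lowerSemicontinuous
    {B F : Type*} [MetricSpace B] [MetricSpace F]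
    (f : B → ℝ) (hf : Continuous f) (hfnn : ∀ x, 0 ≤ f x)
    (a b : ℝ) (hab : a ≤ b)
    (γn : ℕ → ℝ → B × F) (γ : ℝ → B × F)
    (hadmn : ∀ n, Admissible (γn n) a b) (hadm : Admissible γ a b)
    (hconv : ∀ t ∈ Set.Icc a b,
      Filter.Tendsto (fun n => γn n t) Filter.atTop (nhds (γ t))) :
    wLength f γ a b ≤ Filter.liminf (fun n => wLength f (γn n) a b) Filter.atTop := by
  rw [wLength]
  refine iSup_le fun n => iSup_le fun t => iSup_le fun hmono => iSup_le fun h0 =>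
    iSup_le fun hlast => ?_
  have hmem : ∀ i : Fin (n + 1), t i ∈ Set.Icc a b := by
    intro i
    refine ⟨h0 ▸ hmono (Fin.zero_le i), hlast ▸ hmono (Fin.le_last i)⟩
  have htend : Filter.Tendsto (fun m => wSum f (γn m) t) Filter.atTop
      (nhds (wSum f γ t)) := by
    rw [wSum]
    refine tendsto_finset_sum _ fun i _ => ?_
    have hx := hconv (t i.castSucc) (hmem _)
    have hy := hconv (t i.succ) (hmem _)
    have hx1 : Filter.Tendsto (fun m => (γn m (t i.castSucc)).1) Filter.atTop
        (nhds (γ (t i.castSucc)).1) := (continuous_fst.tendsto _).comp hx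
    have hy1 : Filter.Tendsto (fun m => (γn m (t i.succ)).1) Filter.atTop
        (nhds (γ (t i.succ)).1) := (continuous_fst.tendsto _).comp hy
    have hx2 : Filter.Tendsto (fun m => (γn m (t i.castSucc)).2) Filter.atTop
        (nhds (γ (t i.castSucc)).2) := (continuous_snd.tendsto _).comp hx
    have hy2 : Filter.Tendsto (fun m => (γn m (t i.succ)).2) Filter.atTop
        (nhds (γ (t i.succ)).2) := (continuous_snd.tendsto _).comp hy
    have hreal : Filter.Tendsto
        (fun m => Real.sqrt (dist (γn m (t i.castSucc)).1 (γn m (t i.succ)).1 ^ 2 +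
          f (γn m (t i.succ)).1 ^ 2 * dist (γn m (t i.castSucc)).2 (γn m (t i.succ)).2 ^ 2))
        Filter.atTop
        (nhds (Real.sqrt (dist (γ (t i.castSucc)).1 (γ (t i.succ)).1 ^ 2 +
          f (γ (t i.succ)).1 ^ 2 * dist (γ (t i.castSucc)).2 (γ (t i.succ)).2 ^ 2))) := by
      exact (Real.continuous_sqrt.tendsto _).comp
        (((hx1.dist hy1).pow 2).add
          ((((hf.tendsto _).comp hy1).pow 2).mul ((hx2.dist hy2).pow 2)))
    exact (ENNReal.continuous_ofReal.tendsto _).comp hreal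
  have hle : ∀ m, wSum f (γn m) t ≤ wLength f (γn m) a b := by
    intro m
    rw [wLength]
    refine le_trans ?_ (le_iSup _ n)
    refine le_trans ?_ (le_iSup _ t)
    refine le_trans ?_ (le_iSup _ hmono)
    refine le_trans ?_ (le_iSup _ h0)
    exact le_iSup (fun _ : t (Fin.last n) = b => wSum f (γn m) t) hlast
  calc wSum f γ t = Filter.liminf (fun m => wSum f (γn m) t) Filter.atTop :=
        htend.liminf_eq.symm
    _ ≤ Filter.liminf (fun m => wLength f (γn m) a b) Filter.atTop :=
        Filter.liminf_le_liminf (Filter.Eventually.of_forall hle)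
end

section
/- For an admissible path γ = (α,β) in a metric warped product with m := inf_{t} f(α(t)), the warped length satisfies L(γ) ≥ m · L^F(β). In particular, if p = q, f(p) > 0 and x ≠ y, any admissible path from (p,x) to (q,y) has length bounded below by a positive constant (depending on a neighborhood of p), so d_{B×_f F}((p,x),(p,y)) > 0. -/
private lemma sqrt_term_ge (m c A D : ℝ) (hm : 0 ≤ m) (hmc : m ≤ c) (hD : 0 ≤ D) :
    m * D ≤ Real.sqrt (A ^ 2 + c ^ 2 * D ^ 2) := by
  have hc : 0 ≤ c := hm.trans hmc
  calc m * D ≤ c * D := mul_le_mul_of_nonneg_right hmc hD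
    _ = Real.sqrt ((c * D) ^ 2) := (Real.sqrt_sq (by positivity)).symm
    _ ≤ Real.sqrt (A ^ 2 + c ^ 2 * D ^ 2) := Real.sqrt_le_sqrt (by nlinarith [sq_nonneg A])

/-- For an admissible path `γ = (α,β)` with `m := inf_{t ∈ [a,b]} f(α(t))`,
the warped length satisfies `L(γ) ≥ m · L^F(β)`.  In particular, if `f(p) > 0`
and `x ≠ y`, the warped product distance `d_{B×_f F}((p,x),(p,y))` is positive. -/
theorem warped_length_dominates_fiber
    {B F : Type*} [MetricSpace B] [MetricSpace F]
    (f : B → ℝ) (hf : Continuous f) (hfnn : ∀ x, 0 ≤ f x) :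
    (∀ (a b : ℝ) (γ : ℝ → B × F) (m : ℝ), a ≤ b → Admissible γ a b →
      IsGLB ((fun t => f (γ t).1) '' Set.Icc a b) m →
      ENNReal.ofReal m * eVariationOn (fun t => (γ t).2) (Set.Icc a b) ≤
        wLength f γ a b) ∧
    ∀ (p : B) (x y : F), 0 < f p → x ≠ y → 0 < wDist f (p, x) (p, y) := by
  have key : ∀ (a b : ℝ) (γ : ℝ → B × F) (m : ℝ), a ≤ b → Admissible γ a b →
      IsGLB ((fun t => f (γ t).1) '' Set.Icc a b) m →
      ENNReal.ofReal m * eVariationOn (fun t => (γ t).2) (Set.Icc a b) ≤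
        wLength f γ a b := by
    intro a b γ m hab hγ hm
    have hm0 : 0 ≤ m := hm.2 (fun z hz => by
      obtain ⟨t, -, rfl⟩ := hz; exact hfnn _)
    rw [eVariationOn, ENNReal.mul_iSup]
    refine iSup_le ?_
    rintro ⟨n, u, hu, hus⟩
    set v : ℕ → ℝ := fun k => if k = 0 then a else if k ≤ n + 1 then u (k - 1) else b with hv
    have hvmem : ∀ k, v k ∈ Set.Icc a b := by
      intro k
      by_cases h0 : k = 0
      · simp only [hv, h0, if_pos rfl]; exact ⟨le_rfl, hab⟩
      · by_cases h1 : k ≤ n + 1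
        · simpa [hv, h0, h1] using hus (k - 1)
        · simp only [hv, h0, h1, if_neg, if_false]; exact ⟨hab, le_rfl⟩
    have hvmono : Monotone v := by
      apply monotone_nat_of_le_succ
      intro k
      rcases Nat.eq_zero_or_pos k with h0 | h0
      · subst h0
        simp only [hv]
        simpa using (hus 0).1
      · have hk0 : k ≠ 0 := h0.ne'
        by_cases h1 : k + 1 ≤ n + 1
        · have h2 : k ≤ n + 1 := Nat.le_of_succ_le h1
          simp only [hv]
          rw [if_neg hk0, if_pos h2, if_neg (by omega : ¬ k + 1 = 0), if_pos h1]
          exact hu (by omega)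
        · by_cases h2 : k ≤ n + 1
          · have hk : k = n + 1 := by omega
            simp only [hv]
            rw [if_neg hk0, if_pos h2, if_neg (by omega : ¬ k + 1 = 0), if_neg h1]
            exact (hus (k - 1)).2
          · simp only [hv]
            rw [if_neg hk0, if_neg h2, if_neg (by omega : ¬ k + 1 = 0), if_neg h1]
    set t : Fin (n + 2 + 1) → ℝ := fun i => v i.val with htdef
    have ht0 : t 0 = a := by simp [htdef, hv]
    have htlast : t (Fin.last (n + 2)) = b := by
      simp only [htdef, Fin.val_last, hv]
      norm_num
    have htmono : Monotone t := fun i j hij => hvmono hij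
    refine le_trans ?_ (le_iSup_of_le (n + 2) (le_iSup_of_le t (le_iSup_of_le htmono
      (le_iSup_of_le ht0 (le_iSup_of_le htlast le_rfl)))))
    rw [Finset.mul_sum]
    set G : ℕ → ENNReal := fun k => ENNReal.ofReal
      (Real.sqrt (dist (γ (v k)).1 (γ (v (k + 1))).1 ^ 2 +
        f (γ (v (k + 1))).1 ^ 2 * dist (γ (v k)).2 (γ (v (k + 1))).2 ^ 2)) with hG
    have hwsum : wSum f γ t = ∑ k ∈ Finset.range (n + 2), G k := by
      rw [wSum, ← Fin.sum_univ_eq_sum_range]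
      exact Finset.sum_congr rfl fun i _ => rfl
    calc ∑ i ∈ Finset.range n, ENNReal.ofReal m * edist ((γ (u (i + 1))).2) ((γ (u i)).2)
        ≤ ∑ i ∈ Finset.range n, G (1 + i) := by
          refine Finset.sum_le_sum ?_
          intro i hi
          have hin : i < n := Finset.mem_range.mp hi
          have e1 : 1 + i - 1 = i := by omega
          have e2 : 1 + i + 1 - 1 = i + 1 := by omega
          have hv1 : v (1 + i) = u i := by
            simp only [hv]
            rw [if_neg (by omega : ¬ 1 + i = 0), if_pos (by omega : 1 + i ≤ n + 1), e1]
          have hv2 : v (1 + i + 1) = u (i + 1) := by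
            simp only [hv]
            rw [if_neg (by omega : ¬ 1 + i + 1 = 0), if_pos (by omega : 1 + i + 1 ≤ n + 1), e2]
          rw [hG]
          simp only [hv1, hv2]
          rw [edist_dist, ← ENNReal.ofReal_mul hm0]
          apply ENNReal.ofReal_le_ofReal
          rw [dist_comm]
          exact sqrt_term_ge m _ _ _ hm0
            (hm.1 ⟨u (i + 1), hus (i + 1), rfl⟩) dist_nonneg
      _ = ∑ k ∈ Finset.Ico 1 (n + 1), G k := by
          rw [Finset.sum_Ico_eq_sum_range]
          norm_num
      _ ≤ ∑ k ∈ Finset.range (n + 2), G k := by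
          apply Finset.sum_le_sum_of_subset
          intro k hk
          simp only [Finset.mem_Ico] at hk
          exact Finset.mem_range.mpr (by omega)
      _ = wSum f γ t := hwsum.symm
  refine ⟨key, ?_⟩
  intro p x y hfp hxy
  obtain ⟨δ, hδ, hδf⟩ : ∃ δ > 0, ∀ q, dist q p < δ → dist (f q) (f p) < f p / 2 :=
    Metric.continuous_iff.mp hf p (f p / 2) (half_pos hfp)
  set c : ENNReal := min (ENNReal.ofReal δ) (ENNReal.ofReal (f p / 2) * edist x y) with hc
  have hcpos : 0 < c := by
    apply lt_min
    · exact ENNReal.ofReal_pos.mpr hδ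
    · exact ENNReal.mul_pos (ENNReal.ofReal_pos.mpr (half_pos hfp)).ne'
        (edist_pos.mpr hxy).ne'
  refine hcpos.trans_le ?_
  rw [wDist]
  refine le_iInf fun γ => le_iInf fun hγ => le_iInf fun h0 => le_iInf fun h1 => ?_
  by_cases hcase : ∀ s ∈ Set.Icc (0:ℝ) 1, dist (γ s).1 p < δ
  · -- the base curve stays in the δ-ball: use key
    set m := sInf ((fun t => f (γ t).1) '' Set.Icc (0:ℝ) 1) with hmdef
    have hne : ((fun t => f (γ t).1) '' Set.Icc (0:ℝ) 1).Nonempty :=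
      ⟨f (γ 0).1, ⟨0, Set.mem_Icc.mpr ⟨le_rfl, zero_le_one⟩, rfl⟩⟩
    have hbdd : BddBelow ((fun t => f (γ t).1) '' Set.Icc (0:ℝ) 1) :=
      ⟨0, fun z hz => by obtain ⟨t, -, rfl⟩ := hz; exact hfnn _⟩
    have hm : IsGLB ((fun t => f (γ t).1) '' Set.Icc (0:ℝ) 1) m := isGLB_csInf hne hbdd
    have hm2 : f p / 2 ≤ m := by
      apply le_csInf hne
      rintro z ⟨s, hs, rfl⟩
      have := hδf (γ s).1 (hcase s hs)
      rw [Real.dist_eq, abs_lt] at this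
      linarith [this.1]
    calc c ≤ ENNReal.ofReal (f p / 2) * edist x y := min_le_right _ _
      _ ≤ ENNReal.ofReal m * eVariationOn (fun t => (γ t).2) (Set.Icc (0:ℝ) 1) := by
          apply mul_le_mul' (ENNReal.ofReal_le_ofReal hm2)
          have hx' : (γ (0:ℝ)).2 = x := by rw [h0]
          have hy' : (γ (1:ℝ)).2 = y := by rw [h1]
          rw [← hx', ← hy']
          exact eVariationOn.edist_le _ (Set.mem_Icc.mpr ⟨le_rfl, zero_le_one⟩)
            (Set.mem_Icc.mpr ⟨zero_le_one, le_rfl⟩)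
      _ ≤ wLength f γ 0 1 := key 0 1 γ m zero_le_one hγ hm
  · -- the base curve leaves the δ-ball: base length ≥ δ
    push_neg at hcase
    obtain ⟨s, hs, hds⟩ := hcase
    have hle : c ≤ ENNReal.ofReal δ := min_le_left _ _
    refine hle.trans ?_
    set t : Fin 3 → ℝ := ![0, s, 1] with ht
    have htmono : Monotone t := by
      intro i j hij
      fin_cases i <;> fin_cases j <;>
        simp_all [ht, Fin.le_def] <;>
        first
          | exact hs.1
          | exact hs.2
          | exact le_trans hs.1 hs.2
          | omega
    have ht0 : t 0 = 0 := rfl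
    have htlast : t (Fin.last 2) = 1 := rfl
    refine le_trans ?_ (le_iSup_of_le 2 (le_iSup_of_le t (le_iSup_of_le htmono
      (le_iSup_of_le ht0 (le_iSup_of_le htlast le_rfl)))))
    rw [wSum, Fin.sum_univ_two]
    have h00 : t (0 : Fin 2).castSucc = 0 := rfl
    have h01 : t (0 : Fin 2).succ = s := rfl
    refine le_trans ?_ le_self_add
    rw [h00, h01]
    apply ENNReal.ofReal_le_ofReal
    have hA : δ ≤ dist (γ (0:ℝ)).1 (γ s).1 := by
      rw [h0, dist_comm]
      exact hds
    calc δ ≤ dist (γ (0:ℝ)).1 (γ s).1 := hA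
      _ = Real.sqrt (dist (γ (0:ℝ)).1 (γ s).1 ^ 2) := (Real.sqrt_sq dist_nonneg).symm
      _ ≤ _ := Real.sqrt_le_sqrt (le_add_of_nonneg_right (by positivity))
end

section
/- Fiber independence for metric warped products: if γ = (α, β) is a minimizer in B ×_f F parametrized proportional to arclength with f > 0, and F̂ is another strictly intrinsic metric space with β̂ a minimizing geodesic in F̂ of the same length and speed as β, then (α, β̂) is a minimizer in B ×_f F̂, with L(α,β̂) = L(α,β). -/
open Set

section Aux

variable {B F F' E : Type*} [PseudoMetricSpace B] [PseudoMetricSpace F] [PseudoMetricSpace F']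

/-- partition points lie in `[a,b]` -/
lemma partition_mem {n : ℕ} {t : Fin (n + 1) → ℝ} {a b : ℝ} (ht : Monotone t)
    (h0 : t 0 = a) (h1 : t (Fin.last n) = b) (i : Fin (n + 1)) : t i ∈ Icc a b :=
  ⟨h0 ▸ ht (Fin.zero_le i), h1 ▸ ht (Fin.le_last i)⟩

lemma wSum_le_wSum (f : B → ℝ) {γ : ℝ → B × F} {γ' : ℝ → B × F'} {n : ℕ}
    {t : Fin (n + 1) → ℝ}
    (hfst : ∀ i : Fin (n + 1), (γ' (t i)).1 = (γ (t i)).1)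
    (hsnd : ∀ i j : Fin (n + 1), dist (γ' (t i)).2 (γ' (t j)).2 ≤ dist (γ (t i)).2 (γ (t j)).2) :
    wSum f γ' t ≤ wSum f γ t := by
  refine Finset.sum_le_sum fun i _ => ?_
  refine ENNReal.ofReal_le_ofReal (Real.sqrt_le_sqrt ?_)
  rw [hfst i.castSucc, hfst i.succ]
  refine (add_le_add_iff_left _).2 (mul_le_mul_of_nonneg_left ?_ (sq_nonneg _))
  exact pow_le_pow_left₀ dist_nonneg (hsnd i.castSucc i.succ) 2

lemma wLength_le_wLength (f : B → ℝ) {γ : ℝ → B × F} {γ' : ℝ → B × F'} {a b : ℝ}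
    (hfst : ∀ u, (γ' u).1 = (γ u).1)
    (hsnd : ∀ s t : ℝ, s ∈ Icc a b → t ∈ Icc a b →
      dist (γ' s).2 (γ' t).2 ≤ dist (γ s).2 (γ t).2) :
    wLength f γ' a b ≤ wLength f γ a b := by
  refine iSup_le fun n => iSup_le fun t => iSup_le fun ht => iSup_le fun h0 => iSup_le fun h1 => ?_
  have hle : wSum f γ' t ≤ wSum f γ t :=
    wSum_le_wSum f (fun i => hfst _) (fun i j =>
      hsnd _ _ (partition_mem ht h0 h1 i) (partition_mem ht h0 h1 j))
  refine hle.trans ?_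
  refine le_trans (le_refl _) ?_
  exact le_iSup_of_le n (le_iSup_of_le t (le_iSup_of_le ht (le_iSup_of_le h0 (le_iSup_of_le h1 le_rfl))))

lemma wLength_congr (f : B → ℝ) {γ : ℝ → B × F} {γ' : ℝ → B × F'} {a b : ℝ}
    (hfst : ∀ u, (γ' u).1 = (γ u).1)
    (hsnd : ∀ s t : ℝ, s ∈ Icc a b → t ∈ Icc a b →
      dist (γ' s).2 (γ' t).2 = dist (γ s).2 (γ t).2) :
    wLength f γ' a b = wLength f γ a b :=
  le_antisymm
    (wLength_le_wLength f hfst fun s t hs ht => (hsnd s t hs ht).le)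
    (wLength_le_wLength f (fun u => (hfst u).symm) fun s t hs ht => (hsnd s t hs ht).ge)

lemma wLength_comp_le (f : B → ℝ) (γ : ℝ → B × F) {φ : ℝ → ℝ} (hφ : Monotone φ)
    {a b a' b' : ℝ} (h0 : φ a' = a) (h1 : φ b' = b) :
    wLength f (γ ∘ φ) a' b' ≤ wLength f γ a b := by
  refine iSup_le fun n => iSup_le fun t => iSup_le fun ht => iSup_le fun ht0 => iSup_le fun ht1 => ?_
  have : wSum f (γ ∘ φ) t = wSum f γ (φ ∘ t) := rfl
  rw [this]
  exact le_iSup_of_le n (le_iSup_of_le (φ ∘ t) (le_iSup_of_le (hφ.comp ht)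
    (le_iSup_of_le (by simp [Function.comp, ht0, h0]) (le_iSup_of_le (by simp [Function.comp, ht1, h1]) le_rfl))))

lemma wLength_zero_of_dist_zero (f : B → ℝ) {γ : ℝ → B × F} {a b : ℝ}
    (h : ∀ s t : ℝ, s ∈ Icc a b → t ∈ Icc a b → γ s = γ t) :
    wLength f γ a b = 0 := by
  refine le_antisymm ?_ zero_le
  refine iSup_le fun n => iSup_le fun t => iSup_le fun ht => iSup_le fun h0 => iSup_le fun h1 => ?_
  have : wSum f γ t = 0 := by
    refine Finset.sum_eq_zero fun i _ => ?_
    have he : γ (t i.castSucc) = γ (t i.succ) :=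
      h _ _ (partition_mem ht h0 h1 _) (partition_mem ht h0 h1 _)
    simp [wSum, he]
  simp [this]

lemma wDist_le (f : B → ℝ) {γ : ℝ → B × F} {x y : B × F} (hadm : Admissible γ 0 1)
    (h0 : γ 0 = x) (h1 : γ 1 = y) : wDist f x y ≤ wLength f γ 0 1 :=
  iInf_le_of_le γ (iInf_le_of_le hadm (iInf_le_of_le h0 (iInf_le_of_le h1 le_rfl)))

lemma eVariationOn_le_of_dist_le {g : ℝ → F} {h : ℝ → F'} {S : Set ℝ}
    (H : ∀ s ∈ S, ∀ t ∈ S, dist (g s) (g t) ≤ dist (h s) (h t)) :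
    eVariationOn g S ≤ eVariationOn h S := by
  refine iSup_le fun p => ?_
  refine le_iSup_of_le p ?_
  refine Finset.sum_le_sum fun i _ => ?_
  rw [edist_dist, edist_dist]
  exact ENNReal.ofReal_le_ofReal (H _ (p.2.2.2 _) _ (p.2.2.2 _))

lemma continuousOn_of_dist_eq {g : ℝ → F} {h : ℝ → F'} {S : Set ℝ}
    (H : ∀ s ∈ S, ∀ t ∈ S, dist (g s) (g t) = dist (h s) (h t))
    (hc : ContinuousOn h S) : ContinuousOn g S := by
  intro t ht
  have := hc t ht
  rw [Metric.continuousWithinAt_iff] at this ⊢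
  intro ε hε
  obtain ⟨δ, hδ, hd⟩ := this ε hε
  exact ⟨δ, hδ, fun u hu hud => by rw [H u hu t ht]; exact hd hu hud⟩

end Aux
section Transfer

open Set

lemma exists_fiber_path {F F' : Type*} [MetricSpace F] [MetricSpace F'] (hF : GeodesicMS F)
    (σ₂ : ℝ → F') (x y : F) (hd : dist x y = dist (σ₂ 0) (σ₂ 1))
    (hc : ContinuousOn σ₂ (Icc 0 1)) :
    ∃ g : ℝ → F, g 0 = x ∧ g 1 = y ∧ (∀ s t : ℝ, dist (g s) (g t) ≤ dist (σ₂ s) (σ₂ t)) ∧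
      ContinuousOn g (Icc 0 1) := by
  by_cases hxy : dist x y = 0
  · have hxy' : x = y := by rwa [dist_eq_zero] at hxy
    exact ⟨fun _ => x, rfl, hxy', fun s t => by simp [dist_nonneg], continuousOn_const⟩
  · have hdpos : 0 < dist x y := lt_of_le_of_ne dist_nonneg (Ne.symm hxy)
    obtain ⟨c, hc0, hc1, hciso⟩ := hF x y
    set d := dist x y with hdd
    set g : ℝ → F := fun t => c (dist (σ₂ 0) (σ₂ t) / d) with hg
    have key : ∀ s t : ℝ, dist (g s) (g t) = |dist (σ₂ 0) (σ₂ s) - dist (σ₂ 0) (σ₂ t)| := by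
      intro s t
      rw [hg]
      simp only []
      rw [hciso]
      rw [div_sub_div_same, abs_div, abs_of_pos hdpos]
      field_simp
    refine ⟨g, ?_, ?_, ?_, ?_⟩
    · rw [hg]; simp only [dist_self, zero_div]; exact hc0
    · rw [hg]; simp only [← hd, div_self (ne_of_gt hdpos)]; exact hc1
    · intro s t
      rw [key s t]
      have := abs_dist_sub_le (σ₂ s) (σ₂ t) (σ₂ 0)
      calc |dist (σ₂ 0) (σ₂ s) - dist (σ₂ 0) (σ₂ t)|
          = |dist (σ₂ s) (σ₂ 0) - dist (σ₂ t) (σ₂ 0)| := by rw [dist_comm (σ₂ 0) (σ₂ s), dist_comm (σ₂ 0) (σ₂ t)]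
        _ ≤ dist (σ₂ s) (σ₂ t) := abs_dist_sub_le _ _ _
    · have hlip : LipschitzWith (Real.toNNReal d) c := by
        refine LipschitzWith.of_dist_le_mul fun s t => ?_
        rw [hciso, Real.coe_toNNReal _ dist_nonneg, Real.dist_eq, ← hdd, mul_comm]
      refine hlip.continuous.comp_continuousOn ?_
      exact (((continuous_const.dist continuous_id).comp_continuousOn hc)).div_const d

lemma wDist_fiber_mono {B F F' : Type*} [MetricSpace B] [MetricSpace F] [MetricSpace F']
    (hF : GeodesicMS F) (f : B → ℝ) (p q : B) (x y : F) (x' y' : F')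
    (hxy : dist x y = dist x' y') :
    wDist f (p, x) (q, y) ≤ wDist f (p, x') (q, y') := by
  refine le_iInf fun σ => le_iInf fun hσ => le_iInf fun h0 => le_iInf fun h1 => ?_
  have hσ2 : ContinuousOn (fun t => (σ t).2) (Icc (0:ℝ) 1) :=
    continuous_snd.comp_continuousOn hσ.1
  have hd : dist x y = dist ((σ 0).2) ((σ 1).2) := by rw [h0, h1]; exact hxy
  obtain ⟨g, hg0, hg1, hgle, hgc⟩ := exists_fiber_path hF (fun t => (σ t).2) x y hd hσ2
  have hτadm : Admissible (fun t => ((σ t).1, g t)) 0 1 := by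
    refine ⟨(continuous_fst.comp_continuousOn hσ.1).prodMk hgc, hσ.2.1, ?_⟩
    exact lt_of_le_of_lt
      (eVariationOn_le_of_dist_le (fun s _ t _ => hgle s t)) hσ.2.2
  have hτ0 : (fun t => ((σ t).1, g t)) 0 = (p, x) := by
    show ((σ 0).1, g 0) = (p, x)
    rw [show (σ 0).1 = p from by rw [h0], hg0]
  have hτ1 : (fun t => ((σ t).1, g t)) 1 = (q, y) := by
    show ((σ 1).1, g 1) = (q, y)
    rw [show (σ 1).1 = q from by rw [h1], hg1]
  exact le_trans (wDist_le f hτadm hτ0 hτ1)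
    (wLength_le_wLength f (fun u => rfl) (fun s t _ _ => hgle s t))

end Transfer

/-- Fiber independence for metric warped products: if `γ = (α,β)` is a minimizer in
`B ×_f F` parametrized proportionally to arclength with `f > 0`, and `F̂` is another
strictly intrinsic metric space with `β̂` a minimizing geodesic of the same length and
speed as `β` (encoded by `d_{F̂}(β̂ s, β̂ t) = d_F(β s, β t)` for all parameters),
then `(α, β̂)` is a minimizer in `B ×_f F̂` with the same warped length. -/
theorem warped_product_fiber_independence
    {B F F' : Type*} [MetricSpace B] [MetricSpace F] [MetricSpace F']
    [CompleteSpace B] [LocallyCompactSpace B]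
    (hB : GeodesicMS B) (hF : GeodesicMS F) (hF' : GeodesicMS F')
    (f : B → ℝ) (hf : Continuous f) (hfpos : ∀ x, 0 < f x)
    (a b : ℝ) (hab : a ≤ b)
    (α : ℝ → B) (β : ℝ → F) (βhat : ℝ → F')
    (hadm : Admissible (fun t => (α t, β t)) a b)
    (hspeed : ∃ v : ℝ, ∀ s t : ℝ, a ≤ s → s ≤ t → t ≤ b →
      wLength f (fun u => (α u, β u)) s t = ENNReal.ofReal (v * (t - s)))
    (hmin : wLength f (fun t => (α t, β t)) a b = wDist f (α a, β a) (α b, β b))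
    (hββhat : ∀ s t : ℝ, s ∈ Set.Icc a b → t ∈ Set.Icc a b →
      edist (βhat s) (βhat t) = edist (β s) (β t)) :
    wLength f (fun t => (α t, βhat t)) a b = wLength f (fun t => (α t, β t)) a b ∧
    wLength f (fun t => (α t, βhat t)) a b =
      wDist f (α a, βhat a) (α b, βhat b) := by
  have hdist : ∀ s ∈ Set.Icc a b, ∀ t ∈ Set.Icc a b,
      dist (βhat s) (βhat t) = dist (β s) (β t) := by
    intro s hs t ht
    have h := hββhat s t hs ht
    rw [edist_dist, edist_dist] at h
    exact (ENNReal.ofReal_eq_ofReal_iff dist_nonneg dist_nonneg).1 h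
  have part1 : wLength f (fun t => (α t, βhat t)) a b
      = wLength f (fun t => (α t, β t)) a b :=
    wLength_congr f (fun u => rfl) (fun s t hs ht => hdist s hs t ht)
  refine ⟨part1, le_antisymm ?_ ?_⟩
  · rw [part1, hmin]
    have hxy : dist (β a) (β b) = dist (βhat a) (βhat b) :=
      (hdist a ⟨le_rfl, hab⟩ b ⟨hab, le_rfl⟩).symm
    exact wDist_fiber_mono hF f (α a) (α b) (β a) (β b) (βhat a) (βhat b) hxy
  · rcases eq_or_lt_of_le hab with heq | hlt
    · subst heq
      have hconst : Admissible (fun _ : ℝ => (α a, βhat a)) 0 1 := by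
        refine ⟨continuousOn_const, ?_, ?_⟩ <;>
        · rw [eVariationOn.constant_on (by rintro _ ⟨_, _, rfl⟩ _ ⟨_, _, rfl⟩; rfl)]
          exact ENNReal.zero_lt_top
      have h0 : wLength f (fun _ : ℝ => ((α a : B), (βhat a : F'))) 0 1 = 0 :=
        wLength_zero_of_dist_zero f (fun s t _ _ => rfl)
      calc wDist f (α a, βhat a) (α a, βhat a)
          ≤ wLength f (fun _ : ℝ => ((α a : B), (βhat a : F'))) 0 1 :=
            wDist_le f hconst rfl rfl
        _ = 0 := h0
        _ ≤ wLength f (fun t => (α t, βhat t)) a a := zero_le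
    · set ℓ : ℝ → ℝ := fun u => a + (b - a) * u with hℓ
      have hba : (0:ℝ) ≤ b - a := by linarith
      have hℓmono : Monotone ℓ := fun u v huv => by
        simp only [hℓ]
        have := mul_le_mul_of_nonneg_left huv hba
        linarith
      have hℓ0 : ℓ 0 = a := by simp [hℓ]
      have hℓ1 : ℓ 1 = b := by simp [hℓ]
      have hmaps : Set.MapsTo ℓ (Set.Icc 0 1) (Set.Icc a b) := by
        intro u hu
        obtain ⟨hu0, hu1⟩ := hu
        constructor
        · simp only [hℓ]; nlinarith
        · simp only [hℓ]; nlinarith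
      have hℓc : Continuous ℓ := by fun_prop
      have hα : ContinuousOn α (Set.Icc a b) := continuous_fst.comp_continuousOn hadm.1
      have hβ : ContinuousOn β (Set.Icc a b) := continuous_snd.comp_continuousOn hadm.1
      have hβhat : ContinuousOn βhat (Set.Icc a b) :=
        continuousOn_of_dist_eq hdist hβ
      have hγc : ContinuousOn (fun t => ((α t : B), (βhat t : F'))) (Set.Icc a b) :=
        hα.prodMk hβhat
      have hadm' : Admissible ((fun t => ((α t : B), (βhat t : F'))) ∘ ℓ) 0 1 := by
        refine ⟨hγc.comp hℓc.continuousOn hmaps, ?_, ?_⟩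
        · refine lt_of_le_of_lt
            (eVariationOn.comp_le_of_monotoneOn α ℓ (hℓmono.monotoneOn _) hmaps) ?_
          exact hadm.2.1
        · refine lt_of_le_of_lt
            (eVariationOn.comp_le_of_monotoneOn βhat ℓ (hℓmono.monotoneOn _) hmaps) ?_
          refine lt_of_le_of_lt
            (eVariationOn_le_of_dist_le (fun s hs t ht => (hdist s hs t ht).le)) ?_
          exact hadm.2.2
      have h0 : ((fun t => ((α t : B), (βhat t : F'))) ∘ ℓ) 0 = (α a, βhat a) := by
        simp [Function.comp, hℓ0]
      have h1 : ((fun t => ((α t : B), (βhat t : F'))) ∘ ℓ) 1 = (α b, βhat b) := by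
        simp [Function.comp, hℓ1]
      exact le_trans (wDist_le f hadm' h0 h1)
        (wLength_comp_le f (fun t => ((α t : B), (βhat t : F'))) hℓmono hℓ0 hℓ1)
end

section
/- The parabolic cone distance formula: for a strictly intrinsic metric space F, the distance in the warped product ℝ ×_{e^x} F between (s,x) and (t,y) equals the distance in the hyperbolic plane ℍ² ≅ ℝ ×_{e^x} ℝ between (s,0) and (t, d_F(x,y)). -/
lemma wSum_mono {B F F' : Type*} [PseudoMetricSpace B] [PseudoMetricSpace F]
    [PseudoMetricSpace F'] (f : B → ℝ) (γ : ℝ → B × F) (δ : ℝ → B × F')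
    (hbase : ∀ u, (δ u).1 = (γ u).1)
    (hfib : ∀ u v, dist (δ u).2 (δ v).2 ≤ dist (γ u).2 (γ v).2)
    {n : ℕ} (tt : Fin (n + 1) → ℝ) : wSum f δ tt ≤ wSum f γ tt := by
  unfold wSum
  refine Finset.sum_le_sum fun i _ => ?_
  apply ENNReal.ofReal_le_ofReal
  apply Real.sqrt_le_sqrt
  rw [hbase, hbase]
  have h := hfib (tt i.castSucc) (tt i.succ)
  gcongr

lemma wLength_mono {B F F' : Type*} [PseudoMetricSpace B] [PseudoMetricSpace F]
    [PseudoMetricSpace F'] (f : B → ℝ) (γ : ℝ → B × F) (δ : ℝ → B × F')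
    (hbase : ∀ u, (δ u).1 = (γ u).1)
    (hfib : ∀ u v, dist (δ u).2 (δ v).2 ≤ dist (γ u).2 (γ v).2)
    (a b : ℝ) : wLength f δ a b ≤ wLength f γ a b := by
  exact iSup_mono fun n => iSup_mono fun tt => iSup_mono fun _ => iSup_mono fun _ =>
    iSup_mono fun _ => wSum_mono f γ δ hbase hfib tt

/-- The parabolic cone distance formula: for a strictly intrinsic metric space `F`,
the distance in `ℝ ×_{eˣ} F` between `(s,x)` and `(t,y)` equals the distance in the
hyperbolic plane `ℍ² ≅ ℝ ×_{eˣ} ℝ` between `(s,0)` and `(t, d_F(x,y))`. -/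
theorem parabolic_cone_distance
    {F : Type*} [MetricSpace F] (hF : GeodesicMS F)
    (s t : ℝ) (x y : F) :
    wDist (F := F) Real.exp (s, x) (t, y) =
      wDist (F := ℝ) Real.exp (s, (0 : ℝ)) (t, dist x y) := by
  apply le_antisymm
  · -- given a path δ in ℝ×ℝ, build a path γ in ℝ×F via a geodesic
    refine le_iInf fun δ => le_iInf fun hδ => le_iInf fun h0 => le_iInf fun h1 => ?_
    obtain ⟨c, hc0, hc1, hcd⟩ := hF x y
    by_cases hd : dist x y = 0
    · have hxy : x = y := by rwa [dist_eq_zero] at hd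
      set γ : ℝ → ℝ × F := fun u => ((δ u).1, x) with hγ
      have hbase : ∀ u, (γ u).1 = (δ u).1 := fun u => rfl
      have hfib : ∀ u v, dist (γ u).2 (γ v).2 ≤ dist (δ u).2 (δ v).2 := fun u v => by
        simp [hγ, dist_nonneg]
      have hadm : Admissible γ 0 1 := by
        refine ⟨(continuous_fst.comp_continuousOn hδ.1).prodMk continuousOn_const,
          hδ.2.1, ?_⟩
        simp only [hγ]
        rw [eVariationOn.constant_on]
        · exact ENNReal.zero_lt_top
        · rintro a ⟨u, -, rfl⟩ b ⟨v, -, rfl⟩; rfl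
      calc wDist Real.exp (s, x) (t, y) ≤ wLength Real.exp γ 0 1 := by
            refine iInf_le_of_le γ (iInf_le_of_le hadm ?_)
            have e0 : γ 0 = (s, x) := by
              show ((δ 0).1, x) = (s, x); rw [h0]
            have e1 : γ 1 = (t, y) := by
              show ((δ 1).1, x) = (t, y); rw [h1, hxy]
            exact iInf_le_of_le e0 (iInf_le_of_le e1 le_rfl)
        _ ≤ wLength Real.exp δ 0 1 := wLength_mono _ δ γ hbase hfib 0 1
    · have hdpos : 0 < dist x y := lt_of_le_of_ne dist_nonneg (Ne.symm hd)
      set d := dist x y with hdd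
      set γ : ℝ → ℝ × F := fun u => ((δ u).1, c ((δ u).2 / d)) with hγ
      have hbase : ∀ u, (γ u).1 = (δ u).1 := fun u => rfl
      have hfibEq : ∀ u v, dist (γ u).2 (γ v).2 = dist (δ u).2 (δ v).2 := by
        intro u v
        simp only [hγ]
        rw [hcd, Real.dist_eq, div_sub_div_same, abs_div, abs_of_pos hdpos,
          div_mul_cancel₀ _ (ne_of_gt hdpos)]
      have hclip : LipschitzWith d.toNNReal c := by
        apply LipschitzWith.of_dist_le_mul
        intro a b
        rw [hcd a b, Real.coe_toNNReal _ hdpos.le, Real.dist_eq, mul_comm]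
      have hcont : Continuous c := hclip.continuous
      have hadm : Admissible γ 0 1 := by
        refine ⟨(continuous_fst.comp_continuousOn hδ.1).prodMk
          ((hcont.comp (continuous_id.div_const d)).comp_continuousOn
            (continuous_snd.comp_continuousOn hδ.1)), hδ.2.1, ?_⟩
        have hlip2 : LipschitzWith 1 (fun r : ℝ => c (r / d)) := by
          apply LipschitzWith.of_dist_le_mul
          intro a b
          rw [hcd, Real.dist_eq, div_sub_div_same, abs_div, abs_of_pos hdpos,
            div_mul_cancel₀ _ (ne_of_gt hdpos)]
          simp [Real.dist_eq]
        have hlon : LipschitzOnWith 1 (fun r : ℝ => c (r / d)) Set.univ :=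
          hlip2.lipschitzOnWith
        calc eVariationOn (fun u => (γ u).2) (Set.Icc (0:ℝ) 1)
            = eVariationOn ((fun r => c (r / d)) ∘ fun u => (δ u).2) (Set.Icc (0:ℝ) 1) := rfl
          _ ≤ (1 : NNReal) * eVariationOn (fun u => (δ u).2) (Set.Icc (0:ℝ) 1) :=
              hlon.comp_eVariationOn_le (Set.mapsTo_univ _ _)
          _ < ⊤ := by simpa using hδ.2.2
      calc wDist Real.exp (s, x) (t, y) ≤ wLength Real.exp γ 0 1 := by
            refine iInf_le_of_le γ (iInf_le_of_le hadm ?_)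
            have e0 : γ 0 = (s, x) := by
              simp only [hγ, h0]
              simp [hc0]
            have e1 : γ 1 = (t, y) := by
              simp only [hγ, h1]
              rw [div_self (ne_of_gt hdpos), hc1]
            exact iInf_le_of_le e0 (iInf_le_of_le e1 le_rfl)
        _ ≤ wLength Real.exp δ 0 1 :=
            wLength_mono _ δ γ hbase (fun u v => le_of_eq (hfibEq u v)) 0 1
  · -- given a path γ in ℝ×F, build a path δ in ℝ×ℝ via u ↦ dist x (γ u).2
    refine le_iInf fun γ => le_iInf fun hγ => le_iInf fun h0 => le_iInf fun h1 => ?_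
    set δ : ℝ → ℝ × ℝ := fun u => ((γ u).1, dist x (γ u).2) with hδ
    have hbase : ∀ u, (δ u).1 = (γ u).1 := fun u => rfl
    have hfib : ∀ u v, dist (δ u).2 (δ v).2 ≤ dist (γ u).2 (γ v).2 := by
      intro u v
      simp only [hδ, Real.dist_eq, dist_comm x]
      exact abs_dist_sub_le _ _ _
    have hadm : Admissible δ 0 1 := by
      refine ⟨(continuous_fst.comp_continuousOn hγ.1).prodMk
        ((continuous_const.dist continuous_id).comp_continuousOn
          (continuous_snd.comp_continuousOn hγ.1)), hγ.2.1, ?_⟩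
      have hlon : LipschitzOnWith 1 (dist x) Set.univ :=
        (LipschitzWith.dist_right x).lipschitzOnWith
      calc eVariationOn (fun u => (δ u).2) (Set.Icc (0:ℝ) 1)
          = eVariationOn (dist x ∘ fun u => (γ u).2) (Set.Icc (0:ℝ) 1) := rfl
        _ ≤ (1 : NNReal) * eVariationOn (fun u => (γ u).2) (Set.Icc (0:ℝ) 1) :=
            hlon.comp_eVariationOn_le (Set.mapsTo_univ _ _)
        _ < ⊤ := by simpa using hγ.2.2
    calc wDist Real.exp (s, 0) (t, dist x y) ≤ wLength Real.exp δ 0 1 := by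
          refine iInf_le_of_le δ (iInf_le_of_le hadm ?_)
          have e0 : δ 0 = (s, 0) := by simp [hδ, h0]
          have e1 : δ 1 = (t, dist x y) := by simp [hδ, h1]
          exact iInf_le_of_le e0 (iInf_le_of_le e1 le_rfl)
      _ ≤ wLength Real.exp γ 0 1 := wLength_mono _ γ δ hbase hfib 0 1
end
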